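/- The morphism f on {a,b} defined by f(a) = abaababaababababaab and f(b) = abaabaabababababaab maps every right-infinite word over {a,b} to an aba-quasiperiodic infinite word; hence f is strongly quasiperiodic on infinite words. -/

import Mathlib

namespace QPm

variable {A : Type*}

/-- Image of a finite word under a morphism given by images of letters. -/
def applyF (f : A → List A) (w : List A) : List A := (w.map f).flatten

/-- A morphism is non-erasing if images of letters are nonempty. -/
def NonErasing (f : A → List A) : Prop := ∀ a, f a ≠ []

/-- `wpow u k` is the `k`-fold concatenation `u^k`. -/
def wpow (u : List A) (k : ℕ) : List A := (List.replicate k u).flatten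

/-- Every position of `w` is covered by an occurrence of `q` in `w`. -/
def Covers (q w : List A) : Prop :=
  ∀ i < w.length, ∃ j, j ≤ i ∧ i < j + q.length ∧ j + q.length ≤ w.length ∧
    (w.drop j).take q.length = q

/-- `w` is `q`-quasiperiodic. -/
def QP (q w : List A) : Prop := q ≠ [] ∧ w ≠ q ∧ Covers q w

def Quasiperiodic (w : List A) : Prop := ∃ q, QP q w

def Superprimitive (w : List A) : Prop := ¬ Quasiperiodic w

/-- `q` is THE quasiperiod (shortest quasiperiod) of `w`. -/
def IsQuasiperiod (q w : List A) : Prop :=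
  QP q w ∧ ∀ q', QP q' w → q.length ≤ q'.length

/-- Every position of the infinite word `x` is covered by an occurrence of `q`. -/
def InfCovers (q : List A) (x : ℕ → A) : Prop :=
  ∀ i : ℕ, ∃ j, j ≤ i ∧ i < j + q.length ∧
    ∀ t (ht : t < q.length), x (j + t) = q.get ⟨t, ht⟩

/-- The infinite word `x` is `q`-quasiperiodic. -/
def InfQP (q : List A) (x : ℕ → A) : Prop := q ≠ [] ∧ InfCovers q x

def InfQuasiperiodic (x : ℕ → A) : Prop := ∃ q, InfQP q x

/-- `q` is THE quasiperiod (shortest quasiperiod) of the infinite word `x`. -/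
def IsInfQuasiperiod (q : List A) (x : ℕ → A) : Prop :=
  InfQP q x ∧ ∀ q', InfQP q' x → q.length ≤ q'.length

/-- Image of an infinite word under a (non-erasing) morphism: the `n`-th letter
of `f(x)` is the `n`-th letter of the image of a sufficiently long prefix. -/
def mapInf (f : A → List A) (x : ℕ → A) (n : ℕ) : A :=
  (applyF f (List.ofFn (fun i : Fin (n + 1) => x i))).getD n (x 0)

/-- `f` maps every (nonempty) finite word to a quasiperiodic word. -/
def StronglyQPFin (f : A → List A) : Prop :=
  ∀ w : List A, w ≠ [] → Quasiperiodic (applyF f w)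

/-- `f` maps every infinite word to a quasiperiodic infinite word. -/
def StronglyQPInf (f : A → List A) : Prop :=
  ∀ x : ℕ → A, InfQuasiperiodic (mapInf f x)

/-- `f` maps some non-quasiperiodic finite word to a quasiperiodic word. -/
def WeaklyQPFin (f : A → List A) : Prop :=
  ∃ w : List A, ¬ Quasiperiodic w ∧ Quasiperiodic (applyF f w)

/-- `f` maps some non-quasiperiodic infinite word to a quasiperiodic word. -/
def WeaklyQPInf (f : A → List A) : Prop :=
  ∃ x : ℕ → A, ¬ InfQuasiperiodic x ∧ InfQuasiperiodic (mapInf f x)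

/-- The ultimately periodic infinite word `u v^ω` (with default letter `d`
used only when `v` is empty). -/
def ultPer (u v : List A) (d : A) : ℕ → A :=
  fun n => if h : n < u.length then u.get ⟨n, h⟩
           else v.getD ((n - u.length) % v.length) d

/-- A finite word is primitive if it is not a power `u^k` with `k ≥ 2`. -/
def Primitive (w : List A) : Prop :=
  ¬ ∃ (u : List A) (k : ℕ), 2 ≤ k ∧ w = wpow u k

/-- `k`-fold composition of the morphism `f`. -/
def iterF (f : A → List A) : ℕ → A → List A
  | 0, a => [a]
  | (k + 1), a => applyF f (iterF f k a)

/-- `f(a) = abaababaababababaab`, `f(b) = abaabaabababababaab`, with `a := true`, `b := false`. -/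
def f4 : Bool → List Bool
  | true => [true, false, true, true, false, true, false, true, true, false, true, false, true, false, true, false, true, true, false]
  | false => [true, false, true, true, false, true, true, false, true, false, true, false, true, false, true, false, true, true, false]

lemma f4_length (c : Bool) : (f4 c).length = 19 := by cases c <;> rfl

/-- Prefix image. -/
def P4 (x : ℕ → Bool) (m : ℕ) : List Bool :=
  applyF f4 (List.ofFn (fun i : Fin m => x i))

lemma applyF_append (f : Bool → List Bool) (u v : List Bool) :
    applyF f (u ++ v) = applyF f u ++ applyF f v := by
  simp [applyF]

lemma P4_succ (x : ℕ → Bool) (m : ℕ) :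
    P4 x (m + 1) = P4 x m ++ f4 (x m) := by
  have h : (List.ofFn (fun i : Fin (m+1) => x i)) =
      (List.ofFn (fun i : Fin m => x i)) ++ [x m] := by
    rw [List.ofFn_succ']
    simp [List.concat_eq_append, Fin.last]
  rw [P4, h, applyF_append]
  simp [P4, applyF]

lemma P4_length (x : ℕ → Bool) (m : ℕ) : (P4 x m).length = 19 * m := by
  induction m with
  | zero => rfl
  | succ m ih =>
      rw [P4_succ]
      simp [ih, f4_length, Nat.mul_succ]

lemma getP (x : ℕ → Bool) (d : Bool) (m k r : ℕ) (hr : r < 19)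
    (h : 19 * k + r < 19 * m) :
    (P4 x m).getD (19 * k + r) d = (f4 (x k)).getD r d := by
  induction m with
  | zero => omega
  | succ m ih =>
      rw [P4_succ]
      by_cases h2 : 19 * k + r < 19 * m
      · rw [List.getD_append _ _ _ _ (by rw [P4_length]; exact h2)]
        exact ih h2
      · have hk : k = m := by omega
        subst hk
        rw [List.getD_append_right _ _ _ _ (by rw [P4_length]; omega)]
        rw [P4_length]
        congr 1
        omega

lemma mapInf_f4 (x : ℕ → Bool) (n : ℕ) :
    mapInf f4 x n = (P4 x (n + 1)).getD n (x 0) := rfl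

lemma blockpair (x : ℕ → Bool) (k m : ℕ) (hm : m < 38) :
    mapInf f4 x (19 * k + m) = (f4 (x k) ++ f4 (x (k + 1))).getD m true := by
  by_cases h19 : m < 19
  · rw [mapInf_f4, getP x _ _ k m h19 (by omega),
      List.getD_append _ _ _ _ (by rw [f4_length]; exact h19)]
    have hlen : m < (f4 (x k)).length := by rw [f4_length]; exact h19
    rw [List.getD_eq_getElem _ _ hlen, List.getD_eq_getElem _ _ hlen]
  · have h1 : 19 * k + m = 19 * (k + 1) + (m - 19) := by omega
    rw [mapInf_f4, h1, getP x _ _ (k+1) (m-19) (by omega) (by omega),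
      List.getD_append_right _ _ _ _ (by rw [f4_length]; omega)]
    rw [f4_length]
    have hlen : m - 19 < (f4 (x (k+1))).length := by rw [f4_length]; omega
    rw [List.getD_eq_getElem _ _ hlen, List.getD_eq_getElem _ _ hlen]

lemma key4 : ∀ (c c' : Bool) (r : Fin 19), ∃ s : Fin 19, (s : ℕ) ≤ r ∧ (r : ℕ) < s + 3 ∧
    ∀ t : Fin 3, (f4 c ++ f4 c').getD (s + t) true =
      [true, false, true].getD t true := by decide

theorem stmt4 :
    (∀ x : ℕ → Bool, InfQP [true, false, true] (mapInf f4 x)) ∧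
    StronglyQPInf f4 := by
  have main : ∀ x : ℕ → Bool, InfQP [true, false, true] (mapInf f4 x) := by
    intro x
    refine ⟨by simp, ?_⟩
    intro i
    set k := i / 19 with hk
    set r := i % 19 with hrdef
    have hr : r < 19 := Nat.mod_lt _ (by norm_num)
    have hi : i = 19 * k + r := by rw [hk, hrdef]; omega
    obtain ⟨s, hs1, hs2, hs3⟩ := key4 (x k) (x (k + 1)) ⟨r, hr⟩
    simp only [Fin.val_mk] at hs1 hs2
    refine ⟨19 * k + (s : ℕ), by omega, by simp; omega, ?_⟩
    intro t ht
    simp only [List.length_cons, List.length_nil] at ht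
    have hst : (s : ℕ) + t < 38 := by omega
    have h1 : 19 * k + (s : ℕ) + t = 19 * k + ((s : ℕ) + t) := by omega
    rw [h1, blockpair x k _ hst]
    have := hs3 ⟨t, ht⟩
    simp only at this
    rw [this]
    have : ([true, false, true] : List Bool).getD t true =
        ([true, false, true] : List Bool).get ⟨t, ht⟩ := by
      rw [List.getD_eq_getElem _ _ (by simpa using ht)]
      simp
    rw [this]
  exact ⟨main, fun x => ⟨_, main x⟩⟩

end QPm
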